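/- Let p be a prime and s₁, s₂ real numbers with s₁ > 2 and s₂ > 2. Set X = p^{−s₁} and Y = p^{−s₂}. Then (1 − p⁻¹)⁻² times the integral over {(x,y,z) ∈ ℤ_p³ : ‖z‖² ≤ ‖x‖ < ‖y‖ ≤ ‖z‖} of ‖x‖^{s₁−2}·‖z‖^{s₂−1} with respect to μ³ equals (p − 1)·X²Y / ((1 − XY)(1 − X²Y)(1 − pX²Y)). -/

import Mathlib

open MeasureTheory ENNReal

variable {p : ℕ} [Fact p.Prime]

lemma aux8_ball_eq_span (n : ℕ) :
    {x : ℤ_[p] | ‖x‖ ≤ (p : ℝ) ^ (-(n : ℤ))} = {x : ℤ_[p] | (p : ℤ_[p]) ^ n ∣ x} := by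
  ext x
  simp only [Set.mem_setOf_eq, PadicInt.norm_le_pow_iff_mem_span_pow, Ideal.mem_span_singleton]

lemma aux8_ball_closed (n : ℕ) : IsClosed {x : ℤ_[p] | ‖x‖ ≤ (p : ℝ) ^ (-(n : ℤ))} :=
  isClosed_le continuous_norm continuous_const

lemma aux8_ball_measurable [MeasurableSpace ℤ_[p]] [BorelSpace ℤ_[p]] (n : ℕ) :
    MeasurableSet {x : ℤ_[p] | ‖x‖ ≤ (p : ℝ) ^ (-(n : ℤ))} :=
  (aux8_ball_closed n).measurableSet

lemma aux8_ball_decomp (n : ℕ) :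
    {x : ℤ_[p] | ‖x‖ ≤ (p : ℝ) ^ (-(n : ℤ))} =
      ⋃ j ∈ Finset.range p,
        ((j : ℤ_[p]) * (p : ℤ_[p]) ^ n + ·) '' {x : ℤ_[p] | ‖x‖ ≤ (p : ℝ) ^ (-((n+1 : ℕ) : ℤ))} := by
  rw [aux8_ball_eq_span, aux8_ball_eq_span]
  ext x
  simp only [Set.mem_setOf_eq, Set.mem_iUnion, Set.mem_image, Finset.mem_range]
  constructor
  · rintro ⟨u, rfl⟩
    refine ⟨u.appr 1, by simpa using u.appr_lt 1, (p : ℤ_[p]) ^ n * (u - (u.appr 1 : ℤ_[p])), ?_, ?_⟩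
    · have h1 : (p : ℤ_[p]) ^ 1 ∣ (u - (u.appr 1 : ℤ_[p])) := by
        have := u.appr_spec 1
        rwa [Ideal.mem_span_singleton] at this
      rw [pow_succ]
      exact mul_dvd_mul_left _ (by simpa using h1)
    · push_cast
      ring
  · rintro ⟨j, hj, y, hy, rfl⟩
    obtain ⟨v, rfl⟩ := hy
    exact ⟨(j : ℤ_[p]) + p * v, by push_cast; ring⟩

lemma aux8_aux8_ball_decomp_disjoint (n : ℕ) :
    Set.PairwiseDisjoint (Finset.range p : Set ℕ)
      (fun j => ((j : ℤ_[p]) * (p : ℤ_[p]) ^ n + ·) ''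
        {x : ℤ_[p] | ‖x‖ ≤ (p : ℝ) ^ (-((n+1 : ℕ) : ℤ))}) := by
  intro j hj k hk hjk
  simp only [Finset.coe_range, Set.mem_Iio] at hj hk
  rw [Function.onFun, Set.disjoint_left]
  rintro z ⟨y₁, hy₁, rfl⟩ ⟨y₂, hy₂, hz⟩
  rw [aux8_ball_eq_span] at hy₁ hy₂
  apply hjk
  have hz' : (k : ℤ_[p]) * (p : ℤ_[p]) ^ n + y₂ = (j : ℤ_[p]) * (p : ℤ_[p]) ^ n + y₁ := hz
  have key : (p : ℤ_[p]) ^ (n+1) ∣ ((j : ℤ) - (k : ℤ) : ℤ) * (p : ℤ_[p]) ^ n := by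
    have heq : (((j : ℤ) - (k : ℤ) : ℤ) : ℤ_[p]) * (p : ℤ_[p]) ^ n = y₂ - y₁ := by
      push_cast
      linear_combination -hz'
    rw [heq]
    exact dvd_sub hy₂ hy₁
  rw [pow_succ'] at key
  have hpn : ((p : ℤ_[p]) ^ n) ≠ 0 := pow_ne_zero _ (NeZero.ne _)
  rw [mul_dvd_mul_iff_right hpn] at key
  have hdvd : (p : ℤ) ∣ ((j : ℤ) - (k : ℤ)) := by
    rwa [← PadicInt.norm_lt_one_iff_dvd, PadicInt.norm_int_lt_one_iff_dvd] at key
  have := Int.eq_zero_of_dvd_of_natAbs_lt_natAbs hdvd ?_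
  · omega
  · simp only [Int.natAbs_natCast]
    omega

variable [MeasurableSpace ℤ_[p]] [BorelSpace ℤ_[p]]

lemma aux8_ball_measure (μ : Measure ℤ_[p]) [μ.IsAddHaarMeasure] (hμ : μ Set.univ = 1) (n : ℕ) :
    μ {x : ℤ_[p] | ‖x‖ ≤ (p : ℝ) ^ (-(n : ℤ))} = ((p : ℝ≥0∞))⁻¹ ^ n := by
  have hp1 : 1 < p := (Fact.out : p.Prime).one_lt
  have hstep : ∀ m : ℕ, μ {x : ℤ_[p] | ‖x‖ ≤ (p : ℝ) ^ (-(m : ℤ))} =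
      (p : ℝ≥0∞) * μ {x : ℤ_[p] | ‖x‖ ≤ (p : ℝ) ^ (-((m+1 : ℕ) : ℤ))} := by
    intro m
    rw [aux8_ball_decomp m, measure_biUnion_finset (aux8_aux8_ball_decomp_disjoint m)
      (fun j _ => by
        rw [Set.image_add_left]
        exact (aux8_ball_measurable (m+1)).preimage (measurable_const_add _))]
    have : ∀ j ∈ Finset.range p,
        μ (((j : ℤ_[p]) * (p : ℤ_[p]) ^ m + ·) ''
          {x : ℤ_[p] | ‖x‖ ≤ (p : ℝ) ^ (-((m+1 : ℕ) : ℤ))}) =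
        μ {x : ℤ_[p] | ‖x‖ ≤ (p : ℝ) ^ (-((m+1 : ℕ) : ℤ))} := by
      intro j _
      rw [Set.image_add_left, measure_preimage_add]
    rw [Finset.sum_congr rfl this, Finset.sum_const, Finset.card_range, nsmul_eq_mul]
  induction n with
  | zero =>
    rw [pow_zero]
    rw [← hμ]
    congr 1
    ext x
    simpa using x.norm_le_one
  | succ n ih =>
    have h := hstep n
    rw [ih] at h
    have hp0 : (p : ℝ≥0∞) ≠ 0 := by
      simp only [ne_eq, Nat.cast_eq_zero]
      omega
    have hptop : (p : ℝ≥0∞) ≠ ⊤ := ENNReal.natCast_ne_top p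
    have := congrArg (fun t => (p : ℝ≥0∞)⁻¹ * t) h
    simp only [← mul_assoc, ENNReal.inv_mul_cancel hp0 hptop, one_mul] at this
    rw [← this, pow_succ, mul_comm]

lemma aux8_sphere_eq_diff (n : ℕ) :
    {x : ℤ_[p] | ‖x‖ = (p : ℝ) ^ (-(n : ℤ))} =
      {x : ℤ_[p] | ‖x‖ ≤ (p : ℝ) ^ (-(n : ℤ))} \ {x : ℤ_[p] | ‖x‖ ≤ (p : ℝ) ^ (-((n+1 : ℕ) : ℤ))} := by
  have hp1 : (1 : ℝ) < p := by exact_mod_cast (Fact.out : p.Prime).one_lt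
  ext x
  simp only [Set.mem_setOf_eq, Set.mem_diff]
  constructor
  · intro h
    refine ⟨le_of_eq h, ?_⟩
    rw [h]
    push_cast
    rw [not_le]
    apply zpow_lt_zpow_right₀ hp1
    omega
  · rintro ⟨h1, h2⟩
    have : ¬ (‖x‖ < (p : ℝ) ^ (-(n : ℤ))) := by
      rw [PadicInt.norm_lt_pow_iff_norm_le_pow_sub_one]
      intro h
      apply h2
      convert h using 2
      push_cast
      ring
    exact le_antisymm h1 (not_lt.mp this)

lemma aux8_sphere_measurable (n : ℕ) :
    MeasurableSet {x : ℤ_[p] | ‖x‖ = (p : ℝ) ^ (-(n : ℤ))} := by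
  rw [aux8_sphere_eq_diff]
  exact (aux8_ball_measurable n).diff (aux8_ball_measurable (n+1))

lemma aux8_sphere_measure (μ : Measure ℤ_[p]) [μ.IsAddHaarMeasure] (hμ : μ Set.univ = 1) (n : ℕ) :
    μ {x : ℤ_[p] | ‖x‖ = (p : ℝ) ^ (-(n : ℤ))} =
      ENNReal.ofReal ((1 - (p : ℝ)⁻¹) * ((p : ℝ)⁻¹) ^ n) := by
  have hp0 : (0 : ℝ) < p := by exact_mod_cast (Fact.out : p.Prime).pos
  have hsub : {x : ℤ_[p] | ‖x‖ ≤ (p : ℝ) ^ (-((n+1 : ℕ) : ℤ))} ⊆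
      {x : ℤ_[p] | ‖x‖ ≤ (p : ℝ) ^ (-(n : ℤ))} := by
    intro x hx
    have hp1 : (1 : ℝ) < p := by exact_mod_cast (Fact.out : p.Prime).one_lt
    have : (-((n+1 : ℕ) : ℤ)) ≤ (-(n : ℤ)) := by push_cast; omega
    refine le_trans hx ((zpow_le_zpow_iff_right₀ hp1).mpr this)
  rw [aux8_sphere_eq_diff, measure_diff hsub ((aux8_ball_measurable (n+1)).nullMeasurableSet)
    (measure_ne_top μ _), aux8_ball_measure μ hμ, aux8_ball_measure μ hμ]
  have hinv : ((p : ℝ≥0∞))⁻¹ = ENNReal.ofReal ((p : ℝ)⁻¹) := by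
    rw [ENNReal.ofReal_inv_of_pos hp0, ENNReal.ofReal_natCast]
  rw [hinv, ← ENNReal.ofReal_pow (by positivity), ← ENNReal.ofReal_pow (by positivity),
    ← ENNReal.ofReal_sub (((p : ℝ)⁻¹) ^ n) (by positivity)]
  congr 1
  ring


set_option maxHeartbeats 2000000 in
theorem stmt8 (p : ℕ) [Fact p.Prime]
    [MeasurableSpace ℤ_[p]] [BorelSpace ℤ_[p]]
    (μ : Measure ℤ_[p]) [μ.IsAddHaarMeasure] (hμ : μ Set.univ = 1)
    (s₁ s₂ : ℝ) (hs₁ : 2 < s₁) (hs₂ : 2 < s₂)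
    (X Y : ℝ) (hX : X = (p : ℝ) ^ (-s₁)) (hY : Y = (p : ℝ) ^ (-s₂)) :
    ((1 - (p : ℝ)⁻¹) ^ 2)⁻¹ *
      ∫ w in {w : ℤ_[p] × ℤ_[p] × ℤ_[p] | ‖w.2.2‖ ^ 2 ≤ ‖w.1‖ ∧ ‖w.1‖ < ‖w.2.1‖ ∧ ‖w.2.1‖ ≤ ‖w.2.2‖},
        ‖w.1‖ ^ (s₁ - 2) * ‖w.2.2‖ ^ (s₂ - 1) ∂(μ.prod (μ.prod μ)) =
      ((p : ℝ) - 1) * X ^ 2 * Y / ((1 - X * Y) * (1 - X ^ 2 * Y) * (1 - (p : ℝ) * X ^ 2 * Y)) := by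
  have hprime : p.Prime := Fact.out
  have hp1 : (1 : ℝ) < p := by exact_mod_cast hprime.one_lt
  have hp0 : (0 : ℝ) < p := lt_trans zero_lt_one hp1
  -- constants
  set T : ℝ := (p : ℝ)⁻¹ with hT
  have hT0 : 0 < T := by positivity
  have hT1 : T < 1 := inv_lt_one_of_one_lt₀ hp1
  have hX0 : 0 < X := hX ▸ Real.rpow_pos_of_pos hp0 _
  have hX1 : X < 1 := hX ▸ Real.rpow_lt_one_of_one_lt_of_neg hp1 (by linarith)
  have hY0 : 0 < Y := hY ▸ Real.rpow_pos_of_pos hp0 _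
  have hY1 : Y < 1 := hY ▸ Real.rpow_lt_one_of_one_lt_of_neg hp1 (by linarith)
  set Q : ℝ := (p : ℝ) * X with hQ
  have hQr : Q = (p : ℝ) ^ ((1 : ℝ) - s₁) := by
    rw [hQ, hX, sub_eq_add_neg, Real.rpow_add hp0, Real.rpow_one]
  have hQ0 : 0 < Q := by rw [hQr]; exact Real.rpow_pos_of_pos hp0 _
  have hQ1 : Q < 1 := by rw [hQr]; exact Real.rpow_lt_one_of_one_lt_of_neg hp1 (by linarith)
  have hTQ : T * Q = X := by rw [hT, hQ]; field_simp
  set K : ℝ := (1 - (p : ℝ)⁻¹) ^ 3 with hK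
  have hK0 : (0:ℝ) ≤ K := by
    rw [hK]
    have h1 : (p:ℝ)⁻¹ < 1 := inv_lt_one_of_one_lt₀ hp1
    exact pow_nonneg (by linarith) 3
  clear_value T Q K
  set h : ℕ × ℕ × ℕ → ℝ := fun n =>
    if n.1 ≤ n.2.1 ∧ n.2.1 < n.2.2 ∧ n.2.2 ≤ 2 * n.1 then
      K * Q ^ n.2.2 * T ^ n.2.1 * Y ^ n.1 else 0 with hh
  -- sets
  set Sph : ℕ → Set ℤ_[p] := fun n => {x | ‖x‖ = (p : ℝ) ^ (-(n : ℤ))} with hSph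
  set S : Set (ℤ_[p] × ℤ_[p] × ℤ_[p]) :=
    {w | ‖w.2.2‖ ^ 2 ≤ ‖w.1‖ ∧ ‖w.1‖ < ‖w.2.1‖ ∧ ‖w.2.1‖ ≤ ‖w.2.2‖} with hSdef
  set box : ℕ × ℕ × ℕ → Set (ℤ_[p] × ℤ_[p] × ℤ_[p]) := fun n =>
    (Sph n.2.2) ×ˢ ((Sph n.2.1) ×ˢ (Sph n.1)) with hbox
  set F : ℤ_[p] × ℤ_[p] × ℤ_[p] → ℝ := fun w => ‖w.1‖ ^ (s₁ - 2) * ‖w.2.2‖ ^ (s₂ - 1) with hF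
  set π : Measure (ℤ_[p] × ℤ_[p] × ℤ_[p]) := μ.prod (μ.prod μ) with hπ
  -- basic zpow comparison facts
  have hle : ∀ m n : ℕ, ((p : ℝ) ^ (-(m : ℤ)) ≤ (p : ℝ) ^ (-(n : ℤ))) ↔ n ≤ m := by
    intro m n; rw [zpow_le_zpow_iff_right₀ hp1]; omega
  have hlt : ∀ m n : ℕ, ((p : ℝ) ^ (-(m : ℤ)) < (p : ℝ) ^ (-(n : ℤ))) ↔ n < m := by
    intro m n; rw [zpow_lt_zpow_iff_right₀ hp1]; omega
  have hsq : ∀ m : ℕ, ((p : ℝ) ^ (-(m : ℤ))) ^ 2 = (p : ℝ) ^ (-((2 * m : ℕ) : ℤ)) := by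
    intro m; rw [sq, ← zpow_add₀ (ne_of_gt hp0)]; congr 1; push_cast; ring
  have hinj : ∀ m n : ℕ, (p : ℝ) ^ (-(m : ℤ)) = (p : ℝ) ^ (-(n : ℤ)) → m = n := by
    intro m n hmn
    have := (zpow_right_strictMono₀ hp1).injective hmn
    omega
  -- measurability
  have hFc : Continuous F := by
    apply Continuous.mul
    · exact (continuous_norm.comp continuous_fst).rpow_const (fun x => Or.inr (by linarith))
    · exact (continuous_norm.comp (continuous_snd.comp continuous_snd)).rpow_const
        (fun x => Or.inr (by linarith))
  have hF0 : ∀ w, 0 ≤ F w := fun w =>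
    mul_nonneg (Real.rpow_nonneg (norm_nonneg _) _) (Real.rpow_nonneg (norm_nonneg _) _)
  have hSm : MeasurableSet S := by
    rw [hSdef]
    simp only [Set.setOf_and]
    refine MeasurableSet.inter ?_ (MeasurableSet.inter ?_ ?_)
    · exact measurableSet_le (((continuous_norm.comp (continuous_snd.comp continuous_snd)).pow 2).measurable)
        (continuous_norm.comp continuous_fst).measurable
    · exact measurableSet_lt (continuous_norm.comp continuous_fst).measurable
        (continuous_norm.comp (continuous_fst.comp continuous_snd)).measurable
    · exact measurableSet_le (continuous_norm.comp (continuous_fst.comp continuous_snd)).measurable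
        (continuous_norm.comp (continuous_snd.comp continuous_snd)).measurable
  have hboxm : ∀ n, MeasurableSet (box n) := fun n =>
    (aux8_sphere_measurable n.2.2).prod ((aux8_sphere_measurable n.2.1).prod (aux8_sphere_measurable n.1))
  -- cover
  have hcover : S = ⋃ n : ℕ × ℕ × ℕ, (S ∩ box n) := by
    ext w
    simp only [Set.mem_iUnion, Set.mem_inter_iff]
    constructor
    · intro hw
      obtain ⟨h1, h2, h3⟩ := hw
      have hzne : w.2.2 ≠ 0 := by
        intro h0
        rw [h0, norm_zero] at h3
        have hy0 : ‖w.2.1‖ = 0 := le_antisymm h3 (norm_nonneg _)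
        rw [hy0] at h2
        exact absurd h2 (not_lt.mpr (norm_nonneg _))
      have hyne : w.2.1 ≠ 0 := by
        intro h0
        rw [h0, norm_zero] at h2
        exact absurd h2 (not_lt.mpr (norm_nonneg _))
      have hxne : w.1 ≠ 0 := by
        intro h0
        rw [h0, norm_zero] at h1 h2
        have : ‖w.2.2‖ = 0 := by nlinarith [norm_nonneg w.2.2]
        exact hzne (norm_eq_zero.mp this)
      have hval : ∀ x : ℤ_[p], x ≠ 0 → ‖x‖ = (p : ℝ) ^ (-((x.valuation : ℕ) : ℤ)) := by
        intro x hx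
        exact PadicInt.norm_eq_zpow_neg_valuation hx
      exact ⟨(w.2.2.valuation, w.2.1.valuation, w.1.valuation),
        ⟨h1, h2, h3⟩, hval _ hxne, hval _ hyne, hval _ hzne⟩
    · rintro ⟨n, hw, _⟩
      exact hw
  have hdisj : Pairwise (Function.onFun Disjoint fun n => S ∩ box n) := by
    intro m n hmn
    rw [Function.onFun, Set.disjoint_left]
    rintro w ⟨-, hwx, hwy, hwz⟩ ⟨-, hwx', hwy', hwz'⟩
    exact hmn (Prod.ext (hinj _ _ (hwz.symm.trans hwz'))
      (Prod.ext (hinj _ _ (hwy.symm.trans hwy')) (hinj _ _ (hwx.symm.trans hwx'))))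
  -- the grouped rpow identity
  have grp : ∀ (r : ℝ) (m : ℕ), ((p : ℝ) ^ (-(m : ℤ))) ^ r * T ^ m = ((p : ℝ) ^ (-(r + 1))) ^ m := by
    intro r m
    have h1 : ((p : ℝ) ^ (-(m : ℤ))) ^ r = (p : ℝ) ^ ((-(m : ℝ)) * r) := by
      rw [← Real.rpow_intCast (p : ℝ) (-(m : ℤ)), ← Real.rpow_mul hp0.le]
      congr 1
      push_cast
      ring
    have h2 : T ^ m = (p : ℝ) ^ (-(m : ℝ)) := by
      rw [hT, Real.rpow_neg hp0.le, Real.rpow_natCast, inv_pow]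
    have h3 : ((p : ℝ) ^ (-(r + 1))) ^ m = (p : ℝ) ^ ((-(r + 1)) * m) := by
      rw [← Real.rpow_natCast ((p : ℝ) ^ (-(r + 1))) m, ← Real.rpow_mul hp0.le]
    rw [h1, h2, h3, ← Real.rpow_add hp0]
    congr 1
    ring
  have hQgrp : Q = (p : ℝ) ^ (-(s₁ - 2 + 1)) := by
    rw [hQr]; congr 1; ring
  have hYgrp : Y = (p : ℝ) ^ (-(s₂ - 1 + 1)) := by
    rw [hY]; congr 1; ring
  -- main lintegral computation
  have hlin : ∫⁻ w in S, ENNReal.ofReal (F w) ∂π = ∑' n : ℕ × ℕ × ℕ, ENNReal.ofReal (h n) := by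
    conv_lhs => rw [hcover]
    rw [lintegral_iUnion (fun n => hSm.inter (hboxm n)) hdisj]
    apply tsum_congr
    rintro ⟨c, b, a⟩
    by_cases hcond : c ≤ b ∧ b < a ∧ a ≤ 2 * c
    · have hSbox : S ∩ box (c, b, a) = box (c, b, a) := by
        apply Set.inter_eq_self_of_subset_right
        rintro w ⟨hwx, hwy, hwz⟩
        simp only [hSph, Set.mem_setOf_eq] at hwx hwy hwz
        refine ⟨?_, ?_, ?_⟩
        · rw [hwz, hwx, hsq c, hle]
          exact hcond.2.2
        · rw [hwx, hwy, hlt]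
          exact hcond.2.1
        · rw [hwy, hwz, hle]
          exact hcond.1
      rw [hSbox]
      have hconst : ∫⁻ w in box (c, b, a), ENNReal.ofReal (F w) ∂π =
          ENNReal.ofReal (((p : ℝ) ^ (-(a : ℤ))) ^ (s₁ - 2) * ((p : ℝ) ^ (-(c : ℤ))) ^ (s₂ - 1)) *
            π (box (c, b, a)) := by
        rw [← setLIntegral_const]
        apply setLIntegral_congr_fun_ae (hboxm (c, b, a))
        apply Filter.Eventually.of_forall
        rintro w ⟨hwx, -, hwz⟩
        simp only [hSph, Set.mem_setOf_eq] at hwx hwz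
        rw [hF]
        simp only
        rw [hwx, hwz]
      rw [hconst, hπ, hbox]
      simp only
      rw [Measure.prod_prod, Measure.prod_prod, aux8_sphere_measure μ hμ, aux8_sphere_measure μ hμ,
        aux8_sphere_measure μ hμ]
      have hw : ∀ m : ℕ, (0:ℝ) ≤ (1 - (p : ℝ)⁻¹) * ((p : ℝ)⁻¹) ^ m := by
        intro m
        have h1 : (p:ℝ)⁻¹ < 1 := inv_lt_one_of_one_lt₀ hp1
        have h2 : (0:ℝ) ≤ ((p:ℝ)⁻¹) ^ m := by positivity
        nlinarith
      rw [← ENNReal.ofReal_mul (by first | positivity | exact hw _),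
        ← ENNReal.ofReal_mul (by first | positivity | exact hw _),
        ← ENNReal.ofReal_mul (by first | positivity | exact hw _)]
      rw [hh]
      simp only [if_pos hcond]
      congr 1
      have e1 := grp (s₁ - 2) a
      have e2 := grp (s₂ - 1) c
      rw [← hQgrp] at e1
      rw [← hYgrp] at e2
      rw [hK]
      simp only [← hT]
      linear_combination ((1 - T) ^ 3 * T ^ b * (((p : ℝ) ^ (-(c : ℤ))) ^ (s₂ - 1)) * T ^ c) * e1 +
        ((1 - T) ^ 3 * T ^ b * Q ^ a) * e2
    · have hSbox : S ∩ box (c, b, a) = ∅ := by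
        rw [Set.eq_empty_iff_forall_notMem]
        rintro w ⟨⟨h1, h2, h3⟩, hwx, hwy, hwz⟩
        simp only [hSph, Set.mem_setOf_eq] at hwx hwy hwz
        rw [hwz, hwx, hsq c, hle] at h1
        rw [hwx, hwy, hlt] at h2
        rw [hwy, hwz, hle] at h3
        exact hcond ⟨h3, h2, h1⟩
      rw [hSbox, Measure.restrict_empty, lintegral_zero_measure, hh]
      simp only [if_neg hcond]
      rw [ENNReal.ofReal_zero]
  -- nonnegativity and summability of h
  have hKT : (0:ℝ) < 1 - T := by linarith
  have hh0 : ∀ n : ℕ × ℕ × ℕ, 0 ≤ h n := by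
    intro n
    rw [hh]
    dsimp only
    split_ifs
    · positivity
    · exact le_refl 0
  have hgsum : Summable (fun n : ℕ × ℕ × ℕ => Y ^ n.1 * (T ^ n.2.1 * Q ^ n.2.2)) :=
    (summable_geometric_of_lt_one hY0.le hY1).mul_of_nonneg
      ((summable_geometric_of_lt_one hT0.le hT1).mul_of_nonneg
        (summable_geometric_of_lt_one hQ0.le hQ1)
        (fun n => by positivity) (fun n => by positivity))
      (fun n => by positivity) (fun n => by positivity)
  have hhs : Summable h := by
    apply Summable.of_nonneg_of_le hh0 _ (hgsum.mul_left K)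
    intro n
    rw [hh]
    dsimp only
    split_ifs
    · apply le_of_eq; ring
    · positivity
  -- convert Bochner integral to the tsum
  rw [integral_eq_lintegral_of_nonneg_ae (Filter.Eventually.of_forall fun w => hF0 w)
    hFc.aestronglyMeasurable]
  rw [hlin, ← ENNReal.ofReal_tsum_of_nonneg hh0 hhs, ENNReal.toReal_ofReal (tsum_nonneg hh0)]
  -- series computation
  have hQm1 : Q - 1 ≠ 0 := by intro hc; linarith [hQ1]
  have hTm1 : T - 1 ≠ 0 := by intro hc; linarith [hT1]
  have hXm1 : X - 1 ≠ 0 := by intro hc; linarith [hX1]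
  set A : ℝ := K * Q / ((Q - 1) * (T - 1)) - K * Q / ((Q - 1) * (X - 1)) with hA
  set B : ℝ := -(K * Q / ((Q - 1) * (T - 1))) with hB
  set C : ℝ := K * Q / ((Q - 1) * (X - 1)) with hC
  have hcsum : ∀ c : ℕ, (∑' m : ℕ × ℕ, h (c, m)) =
      A * (X ^ 2 * Y) ^ c + B * ((p : ℝ) * X ^ 2 * Y) ^ c + C * (X * Y) ^ c := by
    intro c
    rw [Summable.tsum_prod' (hhs.prod_factor c) (fun b => (hhs.prod_factor c).prod_factor b)]
    have step1 : ∀ b : ℕ, (∑' a : ℕ, h (c, b, a)) =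
        ∑ a ∈ Finset.Ico (b + 1) (2 * c + 1), h (c, b, a) := by
      intro b
      apply tsum_eq_sum
      intro a ha
      rw [Finset.mem_Ico] at ha
      rw [hh]
      dsimp only
      exact if_neg (by omega)
    have m1 : (X ^ 2 * Y) ^ c = (Q ^ 2) ^ c * (T ^ 2) ^ c * Y ^ c := by
      rw [← mul_pow, ← mul_pow]
      congr 1
      rw [← hTQ]
      ring
    have m2 : ((p : ℝ) * X ^ 2 * Y) ^ c = (Q ^ 2) ^ c * T ^ c * Y ^ c := by
      rw [← mul_pow, ← mul_pow]
      congr 1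
      rw [hQ, hT]
      field_simp
    have m3 : (X * Y) ^ c = X ^ c * Y ^ c := mul_pow X Y c
    calc (∑' b : ℕ, ∑' a : ℕ, h (c, b, a))
        = ∑ b ∈ Finset.Ico c (2 * c), ∑' a : ℕ, h (c, b, a) := by
          apply tsum_eq_sum
          intro b hb
          rw [Finset.mem_Ico] at hb
          rw [step1 b]
          apply Finset.sum_eq_zero
          intro a ha
          rw [Finset.mem_Ico] at ha
          rw [hh]
          dsimp only
          exact if_neg (by omega)
      _ = ∑ b ∈ Finset.Ico c (2 * c),
            ((K * Y ^ c / (Q - 1)) * Q ^ (2 * c + 1) * T ^ b - (K * Y ^ c / (Q - 1)) * Q * X ^ b) := by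
          apply Finset.sum_congr rfl
          intro b hb
          rw [Finset.mem_Ico] at hb
          rw [step1 b]
          have : ∀ a ∈ Finset.Ico (b + 1) (2 * c + 1), h (c, b, a) = (K * T ^ b * Y ^ c) * Q ^ a := by
            intro a ha
            rw [Finset.mem_Ico] at ha
            rw [hh]
            dsimp only
            rw [if_pos (show c ≤ b ∧ b < a ∧ a ≤ 2 * c by omega)]
            ring
          rw [Finset.sum_congr rfl this, ← Finset.mul_sum,
            geom_sum_Ico (ne_of_lt hQ1) (by omega : b + 1 ≤ 2 * c + 1), ← hTQ]
          field_simp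
          ring
      _ = (K * Y ^ c / (Q - 1)) * Q ^ (2 * c + 1) * ((T ^ (2 * c) - T ^ c) / (T - 1))
            - (K * Y ^ c / (Q - 1)) * Q * ((X ^ (2 * c) - X ^ c) / (X - 1)) := by
          rw [Finset.sum_sub_distrib, ← Finset.mul_sum, ← Finset.mul_sum,
            geom_sum_Ico (ne_of_lt hT1) (by omega : c ≤ 2 * c),
            geom_sum_Ico (ne_of_lt hX1) (by omega : c ≤ 2 * c)]
      _ = A * (X ^ 2 * Y) ^ c + B * ((p : ℝ) * X ^ 2 * Y) ^ c + C * (X * Y) ^ c := by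
          have mX : X ^ (2 * c) = (Q ^ 2) ^ c * (T ^ 2) ^ c := by
            rw [pow_mul, ← mul_pow]
            congr 1
            rw [← hTQ]
            ring
          rw [pow_succ, pow_mul Q 2 c, pow_mul T 2 c, mX, m1, m2, m3, hA, hB, hC]
          field_simp
          ring
  -- sum the geometric series
  have hr1 : X ^ 2 * Y < 1 := by nlinarith
  have hr10 : (0:ℝ) ≤ X ^ 2 * Y := by positivity
  have hr2 : (p : ℝ) * X ^ 2 * Y < 1 := by
    have : (p : ℝ) * X ^ 2 * Y = Q * (X * Y) := by rw [hQ]; ring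
    rw [this]
    nlinarith
  have hr20 : (0:ℝ) ≤ (p : ℝ) * X ^ 2 * Y := by positivity
  have hr3 : X * Y < 1 := by nlinarith
  have hr30 : (0:ℝ) ≤ X * Y := by positivity
  have hs1 : Summable (fun c : ℕ => A * (X ^ 2 * Y) ^ c) :=
    (summable_geometric_of_lt_one hr10 hr1).mul_left A
  have hs2 : Summable (fun c : ℕ => B * ((p : ℝ) * X ^ 2 * Y) ^ c) :=
    (summable_geometric_of_lt_one hr20 hr2).mul_left B
  have hs3 : Summable (fun c : ℕ => C * (X * Y) ^ c) :=
    (summable_geometric_of_lt_one hr30 hr3).mul_left C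
  rw [Summable.tsum_prod' hhs (fun c => hhs.prod_factor c)]
  rw [tsum_congr hcsum, Summable.tsum_add (hs1.add hs2) hs3, Summable.tsum_add hs1 hs2,
    tsum_mul_left, tsum_mul_left, tsum_mul_left,
    tsum_geometric_of_lt_one hr10 hr1, tsum_geometric_of_lt_one hr20 hr2,
    tsum_geometric_of_lt_one hr30 hr3]
  -- final algebra
  have hd1 : 1 - X ^ 2 * Y ≠ 0 := by intro hc; linarith
  have hd2 : 1 - (p : ℝ) * X ^ 2 * Y ≠ 0 := by intro hc; linarith
  have hd3 : 1 - X * Y ≠ 0 := by intro hc; linarith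
  have hp0' : (p : ℝ) ≠ 0 := ne_of_gt hp0
  have hpx1 : (p : ℝ) * X < 1 := hQ ▸ hQ1
  rw [hA, hB, hC, hK, hQ, hT]
  have hi1 : (p:ℝ)⁻¹ < 1 := inv_lt_one_of_one_lt₀ hp1
  have e1 : (p:ℝ) * X - 1 ≠ 0 := by intro hc; nlinarith
  have e2 : (p:ℝ)⁻¹ - 1 ≠ 0 := by intro hc; nlinarith
  have e3 : X - 1 ≠ 0 := hXm1
  have k1 : (1:ℝ) - (p:ℝ)⁻¹ = ((p:ℝ) - 1) / (p:ℝ) := by field_simp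
  have k2 : (p:ℝ)⁻¹ - 1 = (1 - (p:ℝ)) / (p:ℝ) := by field_simp
  have e5 : (p:ℝ) - 1 ≠ 0 := by intro hc; nlinarith
  have e6 : 1 - (p:ℝ) ≠ 0 := by intro hc; nlinarith
  rw [k1, k2]
  field_simp
  ring
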